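/- Let X, Y be i.i.d. Exponential(1) and τ = max(X,Y), A = XY. For every ε > 0, lim_{a→0⁺} P(τ > ε | A < a) = 0. -/

import Mathlib

open MeasureTheory ProbabilityTheory Real Filter
open scoped ENNReal

section helpers
lemma expM_Iic (c : ℝ) (hc : 0 ≤ c) : expMeasure 1 (Set.Iic c) = ENNReal.ofReal (1 - Real.exp (-c)) := by
  have : IsProbabilityMeasure (expMeasure 1) := isProbabilityMeasure_expMeasure one_pos
  rw [← ofReal_cdf (expMeasure 1) c]
  have h := cdf_expMeasure_eq (r := 1) one_pos c
  rw [h]; simp [hc]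

lemma expM_singleton (c : ℝ) : expMeasure 1 {c} = 0 := by
  rw [expMeasure, gammaMeasure, withDensity_apply _ (measurableSet_singleton c)]; simp

lemma expM_Iio (c : ℝ) (hc : 0 ≤ c) : expMeasure 1 (Set.Iio c) = ENNReal.ofReal (1 - Real.exp (-c)) := by
  have h : Set.Iic c = Set.Iio c ∪ {c} := by ext x; simp [le_iff_lt_or_eq]
  have h2 := expM_Iic c hc
  rwa [h, measure_union (Set.disjoint_singleton_right.2 (by simp)) (measurableSet_singleton c),
    expM_singleton, add_zero] at h2

lemma expM_Ico (s t : ℝ) (hs : 0 ≤ s) (hst : s ≤ t) :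
    expMeasure 1 (Set.Ico s t) = ENNReal.ofReal (Real.exp (-s) - Real.exp (-t)) := by
  have h : Set.Iio t = Set.Iio s ∪ Set.Ico s t := by
    ext x; simp only [Set.mem_Iio, Set.mem_union, Set.mem_Ico]
    constructor
    · intro hx; rcases lt_or_ge x s with h' | h'; exacts [Or.inl h', Or.inr ⟨h', hx⟩]
    · rintro (h' | ⟨_, h'⟩); exacts [lt_of_lt_of_le h' hst, h']
  have hd : Disjoint (Set.Iio s) (Set.Ico s t) := by
    rw [Set.disjoint_left]; intro x hx hx2; exact absurd hx2.1 (not_le.2 hx)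
  have this1 := expM_Iio t (hs.trans hst)
  rw [h, measure_union hd measurableSet_Ico, expM_Iio s hs] at this1
  have h1 : (0:ℝ) ≤ 1 - Real.exp (-s) := by
    have := Real.exp_le_one_iff.2 (neg_nonpos.2 hs); linarith
  have h2 : (0:ℝ) ≤ Real.exp (-s) - Real.exp (-t) := by
    have := Real.exp_le_exp.2 (neg_le_neg hst); linarith
  have key : ENNReal.ofReal (1 - Real.exp (-s)) + expMeasure 1 (Set.Ico s t)
      = ENNReal.ofReal (1 - Real.exp (-s)) + ENNReal.ofReal (Real.exp (-s) - Real.exp (-t)) := by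
    rw [this1, ← ENNReal.ofReal_add h1 h2]; ring_nf
  exact (ENNReal.add_right_inj ENNReal.ofReal_ne_top).1 key
end helpers

theorem cond_max_given_small_area
    {Ω : Type*} [MeasurableSpace Ω] (μ : Measure Ω) [IsProbabilityMeasure μ]
    (X Y : Ω → ℝ) (hX : Measurable X) (hY : Measurable Y)
    (hXd : μ.map X = expMeasure 1) (hYd : μ.map Y = expMeasure 1)
    (hind : IndepFun X Y μ) (ε : ℝ) (hε : 0 < ε) :
    Tendsto (fun a : ℝ =>
        ((μ[|{ω | X ω * Y ω < a}]) {ω | max (X ω) (Y ω) > ε}).toReal)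
      (nhdsWithin 0 (Set.Ioi 0)) (nhds 0) := by
  have hPX : ∀ s : Set ℝ, MeasurableSet s → μ (X ⁻¹' s) = expMeasure 1 s := by
    intro s hs; rw [← hXd, Measure.map_apply hX hs]
  have hPY : ∀ s : Set ℝ, MeasurableSet s → μ (Y ⁻¹' s) = expMeasure 1 s := by
    intro s hs; rw [← hYd, Measure.map_apply hY hs]
  set T : Set Ω := {ω | max (X ω) (Y ω) > ε} with hT
  have hSmeas : ∀ a : ℝ, MeasurableSet {ω | X ω * Y ω < a} := fun a =>
    measurableSet_lt (hX.mul hY) measurable_const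
  -- numerator bound
  have hnum : ∀ a : ℝ, 0 < a →
      μ ({ω | X ω * Y ω < a} ∩ T) ≤ ENNReal.ofReal (a / ε) + ENNReal.ofReal (a / ε) := by
    intro a ha
    have haε : 0 < a / ε := div_pos ha hε
    have hsub : {ω | X ω * Y ω < a} ∩ T ⊆ Y ⁻¹' Set.Iio (a / ε) ∪ X ⁻¹' Set.Iio (a / ε) := by
      rintro ω ⟨h1, h2⟩
      have h1' : X ω * Y ω < a := h1
      simp only [hT, Set.mem_setOf_eq, gt_iff_lt, lt_max_iff] at h2
      have hea : ε * (a / ε) = a := by field_simp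
      rcases h2 with h2 | h2
      · left
        simp only [Set.mem_preimage, Set.mem_Iio]
        by_contra hc
        push_neg at hc
        have : a ≤ X ω * Y ω := by
          calc a = ε * (a/ε) := hea.symm
            _ ≤ X ω * Y ω := mul_le_mul h2.le hc haε.le (by linarith)
        linarith
      · right
        simp only [Set.mem_preimage, Set.mem_Iio]
        by_contra hc
        push_neg at hc
        have : a ≤ X ω * Y ω := by
          calc a = (a/ε) * ε := by rw [mul_comm]; exact hea.symm
            _ ≤ X ω * Y ω := mul_le_mul hc h2.le hε.le (by linarith)
        linarith
    calc μ ({ω | X ω * Y ω < a} ∩ T) ≤ μ (Y ⁻¹' Set.Iio (a/ε) ∪ X ⁻¹' Set.Iio (a/ε)) :=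
          measure_mono hsub
      _ ≤ μ (Y ⁻¹' Set.Iio (a/ε)) + μ (X ⁻¹' Set.Iio (a/ε)) := measure_union_le _ _
      _ ≤ ENNReal.ofReal (a / ε) + ENNReal.ofReal (a / ε) := by
          rw [hPY _ measurableSet_Iio, hPX _ measurableSet_Iio,
            expM_Iio _ (div_pos ha hε).le]
          have hb : 1 - Real.exp (-(a/ε)) ≤ a / ε := by
            have := Real.add_one_le_exp (-(a/ε)); linarith
          exact add_le_add (ENNReal.ofReal_le_ofReal hb) (ENNReal.ofReal_le_ofReal hb)
  -- denominator bound
  have hden : ∀ (n : ℕ) (a : ℝ), 0 < a → a * 2 ^ n ≤ 1 →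
      (n : ℝ≥0∞) * ENNReal.ofReal (a / (4 * Real.exp 1)) ≤ μ {ω | X ω * Y ω < a} := by
    intro n a ha han
    set E : ℕ → Set Ω := fun k =>
      X ⁻¹' Set.Ico (2 ^ k * a) (2 ^ (k+1) * a) ∩ Y ⁻¹' Set.Iio ((2 ^ (k+1) : ℝ))⁻¹ with hE
    have hEmeas : ∀ k, MeasurableSet (E k) := fun k =>
      (hX measurableSet_Ico).inter (hY measurableSet_Iio)
    have hEsub : ∀ k, E k ⊆ {ω | X ω * Y ω < a} := by
      rintro k ω ⟨h1, h2⟩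
      simp only [Set.mem_preimage, Set.mem_Ico, Set.mem_Iio] at h1 h2
      simp only [Set.mem_setOf_eq]
      have hXpos : 0 < X ω := lt_of_lt_of_le (by positivity) h1.1
      rcases le_or_gt (Y ω) 0 with hy | hy
      · nlinarith
      · calc X ω * Y ω < 2 ^ (k+1) * a * ((2 ^ (k+1) : ℝ))⁻¹ :=
              mul_lt_mul'' h1.2 h2 hXpos.le hy.le
          _ = a := by field_simp
    have hEdisj : Set.PairwiseDisjoint (↑(Finset.range n)) E := by
      intro i hi j hj hij
      wlog hlt : i < j generalizing i j
      · exact (this hj hi hij.symm (by omega)).symm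
      apply Set.disjoint_left.2
      rintro ω ⟨h1, _⟩ ⟨h3, _⟩
      simp only [Set.mem_preimage, Set.mem_Ico] at h1 h3
      have : (2:ℝ) ^ (i+1) ≤ 2 ^ j := by
        apply pow_le_pow_right₀ (by norm_num) (by omega)
      nlinarith [h1.2, h3.1, pow_pos (show (0:ℝ) < 2 by norm_num) j]
    have hEbound : ∀ k < n, ENNReal.ofReal (a / (4 * Real.exp 1)) ≤ μ (E k) := by
      intro k hk
      have hIco : MeasurableSet (Set.Ico ((2:ℝ) ^ k * a) (2 ^ (k+1) * a)) := measurableSet_Ico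
      have := hind.measure_inter_preimage_eq_mul (Set.Ico ((2:ℝ)^k*a) (2^(k+1)*a))
        (Set.Iio (((2:ℝ)^(k+1))⁻¹)) hIco measurableSet_Iio
      rw [hE]
      simp only []
      rw [this, hPX _ hIco, hPY _ measurableSet_Iio]
      have h2k : (0:ℝ) < 2 ^ k := by positivity
      have h2k1 : (0:ℝ) < 2 ^ (k+1) := by positivity
      have hle : (2:ℝ) ^ k * a ≤ 2 ^ (k+1) * a := by
        have : (2:ℝ)^k ≤ 2^(k+1) := pow_le_pow_right₀ (by norm_num) (by omega)
        nlinarith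
      rw [expM_Ico _ _ (mul_nonneg (by positivity) ha.le) hle, expM_Iio _ (by positivity),
        ← ENNReal.ofReal_mul (sub_nonneg.2 (Real.exp_le_exp.2 (neg_le_neg hle)))]
      apply ENNReal.ofReal_le_ofReal
      -- real inequality
      have ht1 : (2:ℝ) ^ (k+1) * a ≤ 1 := by
        have h2 : (2:ℝ)^(k+1) ≤ 2^n := pow_le_pow_right₀ (by norm_num) (by omega)
        nlinarith
      have hinv1 : ((2:ℝ) ^ (k+1))⁻¹ ≤ 1 := by
        have h1 : (1:ℝ) ≤ 2 ^ (k+1) := one_le_pow₀ (by norm_num)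
        rw [inv_le_one_iff₀]; right; exact h1
      have hinvpos : (0:ℝ) < ((2:ℝ) ^ (k+1))⁻¹ := by positivity
      -- exp(-s) - exp(-t) ≥ exp(-1) * (t - s)
      have hfac1 : Real.exp (-1) * (2^k * a) ≤
          Real.exp (-(2^k*a)) - Real.exp (-(2^(k+1)*a)) := by
        have hts : (2:ℝ)^(k+1)*a - 2^k*a = 2^k*a := by rw [pow_succ]; ring
        have key : Real.exp (-(2^(k+1)*a)) * ((2:ℝ)^(k+1)*a - 2^k*a) ≤
            Real.exp (-(2^k*a)) - Real.exp (-(2^(k+1)*a)) := by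
          have h1 := Real.add_one_le_exp ((2:ℝ)^(k+1)*a - 2^k*a)
          have h2 : Real.exp (-(2^k*a)) =
              Real.exp (-(2^(k+1)*a)) * Real.exp ((2:ℝ)^(k+1)*a - 2^k*a) := by
            rw [← Real.exp_add]; ring_nf
          rw [h2]
          nlinarith [Real.exp_pos (-((2:ℝ)^(k+1)*a))]
        have hmono : Real.exp (-1) ≤ Real.exp (-(2^(k+1)*a)) := by
          apply Real.exp_le_exp.2; linarith
        calc Real.exp (-1) * (2^k * a) ≤ Real.exp (-(2^(k+1)*a)) * (2^k*a) := by
              apply mul_le_mul_of_nonneg_right hmono (by positivity)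
          _ = Real.exp (-(2^(k+1)*a)) * ((2:ℝ)^(k+1)*a - 2^k*a) := by rw [hts]
          _ ≤ _ := key
      -- 1 - exp(-c) ≥ c/2 for 0 ≤ c ≤ 1
      have hfac2 : ((2:ℝ)^(k+1))⁻¹ / 2 ≤ 1 - Real.exp (-(((2:ℝ)^(k+1))⁻¹)) := by
        set c := ((2:ℝ)^(k+1))⁻¹
        have h1 := Real.add_one_le_exp c
        have h2 : Real.exp (-c) * Real.exp c = 1 := by
          rw [← Real.exp_add]; simp
        nlinarith [Real.exp_pos (-c), Real.exp_pos c]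
      calc a / (4 * Real.exp 1)
          = (Real.exp (-1) * (2^k * a)) * (((2:ℝ)^(k+1))⁻¹ / 2) := by
            rw [Real.exp_neg]
            field_simp
            rw [pow_succ]
            ring
        _ ≤ (Real.exp (-(2^k*a)) - Real.exp (-(2^(k+1)*a))) * (1 - Real.exp (-(((2:ℝ)^(k+1))⁻¹))) := by
            apply mul_le_mul hfac1 hfac2 (by positivity) (sub_nonneg.2 (Real.exp_le_exp.2 (by linarith)))
    calc (n : ℝ≥0∞) * ENNReal.ofReal (a / (4 * Real.exp 1))
        = ∑ k ∈ Finset.range n, ENNReal.ofReal (a / (4 * Real.exp 1)) := by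
          simp [Finset.sum_const, nsmul_eq_mul]
      _ ≤ ∑ k ∈ Finset.range n, μ (E k) :=
          Finset.sum_le_sum (fun k hk => hEbound k (Finset.mem_range.1 hk))
      _ = μ (⋃ k ∈ Finset.range n, E k) :=
          (measure_biUnion_finset hEdisj (fun k _ => hEmeas k)).symm
      _ ≤ μ {ω | X ω * Y ω < a} := by
          apply measure_mono
          exact Set.iUnion₂_subset (fun k _ => hEsub k)
  -- main limit argument
  rw [Metric.tendsto_nhdsWithin_nhds]
  intro δ hδ
  obtain ⟨n, hn⟩ := exists_nat_gt (8 * Real.exp 1 / (ε * δ))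
  have hnpos : 0 < (n:ℝ) := lt_of_le_of_lt (by positivity) hn
  refine ⟨((2:ℝ) ^ n)⁻¹, by positivity, ?_⟩
  intro a ha hdist
  rw [Set.mem_Ioi] at ha
  rw [Real.dist_eq, sub_zero, abs_of_pos ha] at hdist
  have han : a * 2 ^ n ≤ 1 := by
    have h2 : (0:ℝ) < 2^n := by positivity
    have := mul_le_mul_of_nonneg_right hdist.le h2.le
    rwa [inv_mul_cancel₀ h2.ne'] at this
  rw [Real.dist_eq, sub_zero]
  have hD := hden n a ha han
  have hN := hnum a ha
  rw [cond_apply (hSmeas a)]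
  set D := μ {ω | X ω * Y ω < a} with hDdef
  set N := μ ({ω | X ω * Y ω < a} ∩ T) with hNdef
  have hDfin : D ≠ ⊤ := (measure_lt_top μ _).ne
  have hNfin : N ≠ ⊤ := (measure_lt_top μ _).ne
  have hc4e : 0 < a / (4 * Real.exp 1) := by positivity
  have hDtoReal : (n:ℝ) * (a / (4 * Real.exp 1)) ≤ D.toReal := by
    have := ENNReal.toReal_mono hDfin hD
    rwa [ENNReal.toReal_mul, ENNReal.toReal_natCast, ENNReal.toReal_ofReal hc4e.le] at this
  have hDpos : 0 < D.toReal := lt_of_lt_of_le (by positivity) hDtoReal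
  have hNtoReal : N.toReal ≤ 2 * (a / ε) := by
    have h2 : ENNReal.ofReal (a/ε) + ENNReal.ofReal (a/ε) = ENNReal.ofReal (2*(a/ε)) := by
      rw [← ENNReal.ofReal_add (by positivity) (by positivity)]; ring_nf
    rw [h2] at hN
    exact ENNReal.toReal_le_of_le_ofReal (by positivity) hN
  have habs : (D⁻¹ * N).toReal = N.toReal / D.toReal := by
    rw [ENNReal.toReal_mul, ENNReal.toReal_inv]; ring
  rw [habs, abs_of_nonneg (by positivity)]
  have hbound : N.toReal / D.toReal ≤ (2 * (a/ε)) / ((n:ℝ) * (a / (4 * Real.exp 1))) :=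
    div_le_div₀ (by positivity) hNtoReal (by positivity) hDtoReal
  have heq : (2 * (a/ε)) / ((n:ℝ) * (a / (4 * Real.exp 1))) = 8 * Real.exp 1 / ((n:ℝ) * ε) := by
    have he := Real.exp_pos 1
    field_simp
    ring
  have hlast : 8 * Real.exp 1 / ((n:ℝ) * ε) < δ := by
    rw [div_lt_iff₀ (by positivity)]
    rw [div_lt_iff₀ (by positivity)] at hn
    nlinarith
  calc N.toReal / D.toReal ≤ (2 * (a/ε)) / ((n:ℝ) * (a / (4 * Real.exp 1))) := hbound
    _ = 8 * Real.exp 1 / ((n:ℝ) * ε) := heq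
    _ < δ := hlast
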